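/- arXiv:2104.09667 — 3 statements merged into one kernel-verified Lean document; each statement's English description precedes it below -/
import Mathlib

section
/- For the SGD iteration θ_{k+1} = θ_k − η ∇L̂_k(θ_k) over N steps with smooth losses, the iterate satisfies θ_{N+1} = θ_1 − η Σ_{j=1}^N ∇L̂_j(θ_1) + η² Σ_{j=1}^N Σ_{k<j} ∇∇L̂_j(θ_1) ∇L̂_k(θ_1) + O(N³η³), so the second-order correction term depends on the order of the batches. -/
open Finset

section Helpers

open InnerProductSpace

variable {E : Type*} [NormedAddCommGroup E] [InnerProductSpace ℝ E] [CompleteSpace E]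

private lemma norm_iso_comp' {F G H : Type*} [NormedAddCommGroup F] [NormedAddCommGroup G]
    [NormedAddCommGroup H] [NormedSpace ℝ F] [NormedSpace ℝ G] [NormedSpace ℝ H]
    (e : G ≃ₗᵢ[ℝ] H) (A : F →L[ℝ] G) : ‖(e : G →L[ℝ] H).comp A‖ = ‖A‖ := by
  refine le_antisymm (ContinuousLinearMap.opNorm_le_bound _ (norm_nonneg A) fun x => ?_)
    (ContinuousLinearMap.opNorm_le_bound _ (norm_nonneg _) fun x => ?_)
  · simpa [e.norm_map] using A.le_opNorm x
  · calc ‖A x‖ = ‖(e : G →L[ℝ] H).comp A x‖ := by simp [e.norm_map]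
      _ ≤ _ := ContinuousLinearMap.le_opNorm _ x

private noncomputable def dualIso' (E : Type*) [NormedAddCommGroup E] [InnerProductSpace ℝ E]
    [CompleteSpace E] : StrongDual ℝ E ≃ₗᵢ[ℝ] E := (toDual ℝ E).symm

section
variable (f : E → ℝ) (hf : ContDiff ℝ 3 f) (B : ℝ)
  (hb : ∀ x, ∀ i ≤ 3, ‖iteratedFDeriv ℝ i f x‖ ≤ B)

private lemma fderiv_gradient_eq' (x : E) :
    fderiv ℝ (gradient f) x
      = ((dualIso' E : StrongDual ℝ E ≃ₗᵢ[ℝ] E) : StrongDual ℝ E →L[ℝ] E).comp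
          (fderiv ℝ (fderiv ℝ f) x) := by
  have : gradient f = ⇑(dualIso' E) ∘ (fderiv ℝ f) := rfl
  rw [this, LinearIsometryEquiv.comp_fderiv]

include hb in
private lemma grad_norm_le' (x : E) : ‖gradient f x‖ ≤ B := by
  have h1 : ‖gradient f x‖ = ‖fderiv ℝ f x‖ := (toDual ℝ E).symm.norm_map _
  have h2 : ‖fderiv ℝ f x‖ = ‖iteratedFDeriv ℝ 1 f x‖ := by
    rw [← norm_iteratedFDeriv_fderiv (n := 0), norm_iteratedFDeriv_zero]
  rw [h1, h2]; exact hb x 1 (by norm_num)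

include hb in
private lemma fderiv_grad_norm_le' (x : E) : ‖fderiv ℝ (gradient f) x‖ ≤ B := by
  rw [fderiv_gradient_eq', norm_iso_comp']
  have h2 : ‖fderiv ℝ (fderiv ℝ f) x‖ = ‖iteratedFDeriv ℝ 2 f x‖ := by
    rw [← norm_iteratedFDeriv_fderiv (n := 1),
      ← norm_iteratedFDeriv_fderiv (n := 0), norm_iteratedFDeriv_zero]
  rw [h2]; exact hb x 2 (by norm_num)

include hf in
private lemma grad_differentiable' : Differentiable ℝ (gradient f) := by
  have h1 : Differentiable ℝ (fderiv ℝ f) :=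
    (hf.fderiv_right (m := 2) (by norm_num)).differentiable (by norm_num)
  exact (dualIso' E).differentiable.comp h1

include hf hb in
private lemma grad_lipschitz' (x y : E) : ‖gradient f x - gradient f y‖ ≤ B * ‖x - y‖ := by
  refine Convex.norm_image_sub_le_of_norm_fderiv_le
    (fun z _ => (grad_differentiable' f hf z)) (fun z _ => fderiv_grad_norm_le' f B hb z)
    convex_univ trivial trivial

set_option synthInstance.maxHeartbeats 400000 in
include hf hb in
private lemma fderiv_grad_lipschitz' (x y : E) :
    ‖fderiv ℝ (gradient f) x - fderiv ℝ (gradient f) y‖ ≤ B * ‖x - y‖ := by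
  have hd2 : Differentiable ℝ (fderiv ℝ (fderiv ℝ f)) := by
    have : ContDiff ℝ 2 (fderiv ℝ f) := hf.fderiv_right (m := 2) (by norm_num)
    exact (this.fderiv_right (m := 1) (by norm_num)).differentiable (by norm_num)
  have hlip : ‖fderiv ℝ (fderiv ℝ f) x - fderiv ℝ (fderiv ℝ f) y‖ ≤ B * ‖x - y‖ := by
    refine Convex.norm_image_sub_le_of_norm_fderiv_le (𝕜 := ℝ) (f := fderiv ℝ (fderiv ℝ f)) (fun z _ => hd2 z)
      (fun z _ => ?_) convex_univ trivial trivial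
    have h3 := hb z 3 le_rfl
    rw [← norm_iteratedFDeriv_fderiv (n := 2), ← norm_iteratedFDeriv_fderiv (n := 1),
      ← norm_iteratedFDeriv_fderiv (n := 0), norm_iteratedFDeriv_zero] at h3
    exact h3
  calc ‖fderiv ℝ (gradient f) x - fderiv ℝ (gradient f) y‖
      = ‖((dualIso' E : StrongDual ℝ E ≃ₗᵢ[ℝ] E) : StrongDual ℝ E →L[ℝ] E).comp
          (fderiv ℝ (fderiv ℝ f) x - fderiv ℝ (fderiv ℝ f) y)‖ := by
        rw [ContinuousLinearMap.comp_sub, ← fderiv_gradient_eq', ← fderiv_gradient_eq']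
    _ = ‖fderiv ℝ (fderiv ℝ f) x - fderiv ℝ (fderiv ℝ f) y‖ := norm_iso_comp' _ _
    _ ≤ B * ‖x - y‖ := hlip

include hf hb in
private lemma grad_taylor' (x y : E) :
    ‖gradient f y - gradient f x - fderiv ℝ (gradient f) x (y - x)‖ ≤ B * ‖y - x‖ ^ 2 := by
  set H := fderiv ℝ (gradient f) x with hH
  have hφd : ∀ z, DifferentiableAt ℝ (fun w => gradient f w - H w) z :=
    fun z => (grad_differentiable' f hf z).sub (H.differentiableAt)
  have key : ‖(gradient f y - H y) - (gradient f x - H x)‖ ≤ (B * ‖y - x‖) * ‖y - x‖ := by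
    refine Convex.norm_image_sub_le_of_norm_fderiv_le (fun z _ => hφd z)
      (fun z hz => ?_) (convex_segment x y) (left_mem_segment ℝ x y) (right_mem_segment ℝ x y)
    have heq : fderiv ℝ (fun w => gradient f w - H w) z = fderiv ℝ (gradient f) z - H := by
      rw [fderiv_fun_sub (grad_differentiable' f hf z) H.differentiableAt, H.fderiv]
    rw [heq]
    have hzx : ‖z - x‖ ≤ ‖y - x‖ := by
      have := dist_add_dist_of_mem_segment hz
      have h1 : dist x z ≤ dist x y := by linarith [dist_nonneg (x := z) (y := y)]
      simpa [dist_eq_norm, norm_sub_rev] using h1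
    calc ‖fderiv ℝ (gradient f) z - H‖ ≤ B * ‖z - x‖ := fderiv_grad_lipschitz' f hf B hb z x
      _ ≤ B * ‖y - x‖ := by
          have hB : 0 ≤ B := le_trans (norm_nonneg _) (hb x 0 (by norm_num))
          exact mul_le_mul_of_nonneg_left hzx hB
  calc ‖gradient f y - gradient f x - H (y - x)‖
      = ‖(gradient f y - H y) - (gradient f x - H x)‖ := by rw [map_sub]; congr 1; abel
    _ ≤ (B * ‖y - x‖) * ‖y - x‖ := key
    _ = B * ‖y - x‖ ^ 2 := by ring

end

end Helpers

/-- second-order (order-dependent) expansion of N steps of SGD. -/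
theorem stmt1 {E : Type*} [NormedAddCommGroup E] [InnerProductSpace ℝ E]
    [CompleteSpace E]
    (N : ℕ) (L : ℕ → E → ℝ)
    (hsmooth : ∀ j, ContDiff ℝ 3 (L j))
    (B : ℝ)
    (hbound : ∀ j x, ∀ i ≤ 3, ‖iteratedFDeriv ℝ i (L j) x‖ ≤ B)
    (θ1 : E) :
    ∃ C : ℝ, ∀ η : ℝ, 0 < η → η ≤ 1 →
      ∀ θ : ℕ → E, θ 1 = θ1 →
        (∀ k, 1 ≤ k → k ≤ N → θ (k + 1) = θ k - η • gradient (L k) (θ k)) →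
        ‖θ (N + 1) -
            (θ1 - η • ∑ j ∈ Finset.Icc 1 N, gradient (L j) θ1
              + (η ^ 2) • ∑ j ∈ Finset.Icc 1 N, ∑ k ∈ Finset.Ico 1 j,
                  (fderiv ℝ (gradient (L j)) θ1) (gradient (L k) θ1))‖
          ≤ C * (N : ℝ) ^ 3 * η ^ 3 := by
  classical
  have hB : 0 ≤ B := le_trans (norm_nonneg _) (hbound 0 θ1 0 (by norm_num))
  refine ⟨2 * B ^ 3, ?_⟩
  intro η hη hη1 θ hθ1 hrec
  set g : ℕ → E → E := fun j => gradient (L j) with hg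
  set H : ℕ → E →L[ℝ] E := fun j => fderiv ℝ (g j) θ1 with hHdef
  have hgnorm : ∀ j x, ‖g j x‖ ≤ B := fun j x => grad_norm_le' (L j) B (hbound j) x
  have hHnorm : ∀ j, ‖H j‖ ≤ B := fun j => fderiv_grad_norm_le' (L j) B (hbound j) θ1
  have hglip : ∀ j x y, ‖g j x - g j y‖ ≤ B * ‖x - y‖ :=
    fun j x y => grad_lipschitz' (L j) (hsmooth j) B (hbound j) x y
  have htay : ∀ j y, ‖g j y - g j θ1 - (H j) (y - θ1)‖ ≤ B * ‖y - θ1‖ ^ 2 :=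
    fun j y => grad_taylor' (L j) (hsmooth j) B (hbound j) θ1 y
  have hrec' : ∀ k, 1 ≤ k → k ≤ N → θ (k + 1) = θ k - η • g k (θ k) := hrec
  show ‖θ (N + 1) -
      (θ1 - η • ∑ j ∈ Finset.Icc 1 N, g j θ1
        + (η ^ 2) • ∑ j ∈ Finset.Icc 1 N, ∑ k ∈ Finset.Ico 1 j,
            (H j) (g k θ1))‖ ≤ 2 * B ^ 3 * (N : ℝ) ^ 3 * η ^ 3
  -- Step A: drift bound
  have drift : ∀ m, m ≤ N → ‖θ (m + 1) - θ1‖ ≤ (m : ℝ) * η * B := by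
    intro m
    induction m with
    | zero => intro _; simp [hθ1]
    | succ n ih =>
      intro hn
      have hn' : n ≤ N := Nat.le_of_succ_le hn
      rw [hrec' (n + 1) (Nat.le_add_left 1 n) hn]
      have heq : θ (n + 1) - η • g (n + 1) (θ (n + 1)) - θ1
          = (θ (n + 1) - θ1) - η • g (n + 1) (θ (n + 1)) := by abel
      rw [heq]
      calc ‖(θ (n + 1) - θ1) - η • g (n + 1) (θ (n + 1))‖
          ≤ ‖θ (n + 1) - θ1‖ + ‖η • g (n + 1) (θ (n + 1))‖ := norm_sub_le _ _
        _ ≤ (n : ℝ) * η * B + η * B := by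
            refine add_le_add (ih hn') ?_
            rw [norm_smul, Real.norm_eq_abs, abs_of_pos hη]
            exact mul_le_mul_of_nonneg_left (hgnorm _ _) (le_of_lt hη)
        _ = ((n : ℝ) + 1) * η * B := by ring
        _ = ((n + 1 : ℕ) : ℝ) * η * B := by push_cast; ring
  -- Step B: telescoping
  have tele : ∀ m, m ≤ N → θ (m + 1) = θ1 - η • ∑ j ∈ Finset.Icc 1 m, g j (θ j) := by
    intro m
    induction m with
    | zero => intro _; simp [hθ1]
    | succ n ih =>
      intro hn
      have hn' : n ≤ N := Nat.le_of_succ_le hn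
      rw [hrec' (n + 1) (Nat.le_add_left 1 n) hn,
        Finset.sum_Icc_succ_top (Nat.le_add_left 1 n), smul_add, ih hn']
      abel
  -- bound on ‖θ k - θ1‖ for 1 ≤ k ≤ N
  have hθbound : ∀ k, 1 ≤ k → k ≤ N → ‖θ k - θ1‖ ≤ (N : ℝ) * η * B := by
    intro k hk1 hkN
    obtain ⟨m, rfl⟩ : ∃ m, k = m + 1 := ⟨k - 1, (Nat.succ_pred_eq_of_pos hk1).symm⟩
    calc ‖θ (m + 1) - θ1‖ ≤ (m : ℝ) * η * B := drift m (Nat.le_of_succ_le hkN)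
      _ ≤ (N : ℝ) * η * B := by
          have : (m : ℝ) ≤ (N : ℝ) := by exact_mod_cast Nat.le_of_succ_le hkN
          have h2 : 0 ≤ η * B := mul_nonneg (le_of_lt hη) hB
          calc (m : ℝ) * η * B = (m : ℝ) * (η * B) := by ring
            _ ≤ (N : ℝ) * (η * B) := mul_le_mul_of_nonneg_right this h2
            _ = (N : ℝ) * η * B := by ring
  -- the remainder
  set r : ℕ → E := fun j => g j (θ j) - g j θ1 + η • ∑ k ∈ Finset.Ico 1 j, (H j) (g k θ1)
    with hrdef
  have hrbound : ∀ j ∈ Finset.Icc 1 N, ‖r j‖ ≤ 2 * B ^ 3 * (N : ℝ) ^ 2 * η ^ 2 := by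
    intro j hj
    rw [Finset.mem_Icc] at hj
    obtain ⟨hj1, hjN⟩ := hj
    -- θ j - θ1 expansion
    obtain ⟨m, rfl⟩ : ∃ m, j = m + 1 := ⟨j - 1, (Nat.succ_pred_eq_of_pos hj1).symm⟩
    have hmN : m ≤ N := Nat.le_of_succ_le hjN
    have hIco : Finset.Ico 1 (m + 1) = Finset.Icc 1 m := Finset.Ico_add_one_right_eq_Icc 1 m
    have hθj : θ (m + 1) - θ1 = -(η • ∑ k ∈ Finset.Icc 1 m, g k (θ k)) := by
      rw [tele m hmN]; abel
    have hθjn : ‖θ (m + 1) - θ1‖ ≤ (N : ℝ) * η * B :=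
      hθbound (m + 1) (Nat.le_add_left 1 m) hjN
    -- split r
    have hsplit : r (m + 1)
        = (g (m + 1) (θ (m + 1)) - g (m + 1) θ1 - (H (m + 1)) (θ (m + 1) - θ1))
          + η • ∑ k ∈ Finset.Icc 1 m, (H (m + 1)) (g k θ1 - g k (θ k)) := by
      simp only [hrdef]
      simp only [hIco]
      rw [hθj]
      simp only [map_neg, map_smul, map_sum, map_sub]
      rw [Finset.sum_sub_distrib, smul_sub]
      abel
    rw [hsplit]
    have h1 : ‖g (m + 1) (θ (m + 1)) - g (m + 1) θ1 - (H (m + 1)) (θ (m + 1) - θ1)‖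
        ≤ B ^ 3 * (N : ℝ) ^ 2 * η ^ 2 := by
      calc ‖g (m + 1) (θ (m + 1)) - g (m + 1) θ1 - (H (m + 1)) (θ (m + 1) - θ1)‖
          ≤ B * ‖θ (m + 1) - θ1‖ ^ 2 := htay (m + 1) (θ (m + 1))
        _ ≤ B * ((N : ℝ) * η * B) ^ 2 := by
            refine mul_le_mul_of_nonneg_left ?_ hB
            exact pow_le_pow_left₀ (norm_nonneg _) hθjn 2
        _ = B ^ 3 * (N : ℝ) ^ 2 * η ^ 2 := by ring
    have h2 : ‖η • ∑ k ∈ Finset.Icc 1 m, (H (m + 1)) (g k θ1 - g k (θ k))‖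
        ≤ B ^ 3 * (N : ℝ) ^ 2 * η ^ 2 := by
      have hterm : ∀ k ∈ Finset.Icc 1 m, ‖(H (m + 1)) (g k θ1 - g k (θ k))‖
          ≤ B * (B * ((N : ℝ) * η * B)) := by
        intro k hk
        rw [Finset.mem_Icc] at hk
        have hk' : ‖g k θ1 - g k (θ k)‖ ≤ B * ((N : ℝ) * η * B) := by
          calc ‖g k θ1 - g k (θ k)‖ = ‖g k (θ k) - g k θ1‖ := norm_sub_rev _ _
            _ ≤ B * ‖θ k - θ1‖ := hglip k (θ k) θ1
            _ ≤ B * ((N : ℝ) * η * B) :=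
                mul_le_mul_of_nonneg_left
                  (hθbound k hk.1 (le_trans hk.2 hmN)) hB
        calc ‖(H (m + 1)) (g k θ1 - g k (θ k))‖
            ≤ ‖H (m + 1)‖ * ‖g k θ1 - g k (θ k)‖ := ContinuousLinearMap.le_opNorm _ _
          _ ≤ B * (B * ((N : ℝ) * η * B)) := by
              refine mul_le_mul (hHnorm _) hk' (norm_nonneg _) hB
      calc ‖η • ∑ k ∈ Finset.Icc 1 m, (H (m + 1)) (g k θ1 - g k (θ k))‖
          = η * ‖∑ k ∈ Finset.Icc 1 m, (H (m + 1)) (g k θ1 - g k (θ k))‖ := by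
            rw [norm_smul, Real.norm_eq_abs, abs_of_pos hη]
        _ ≤ η * ∑ k ∈ Finset.Icc 1 m, ‖(H (m + 1)) (g k θ1 - g k (θ k))‖ :=
            mul_le_mul_of_nonneg_left (norm_sum_le _ _) (le_of_lt hη)
        _ ≤ η * ((m : ℝ) * (B * (B * ((N : ℝ) * η * B)))) := by
            refine mul_le_mul_of_nonneg_left ?_ (le_of_lt hη)
            calc ∑ k ∈ Finset.Icc 1 m, ‖(H (m + 1)) (g k θ1 - g k (θ k))‖
                ≤ ∑ _k ∈ Finset.Icc 1 m, B * (B * ((N : ℝ) * η * B)) :=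
                  Finset.sum_le_sum hterm
              _ = (m : ℝ) * (B * (B * ((N : ℝ) * η * B))) := by
                  rw [Finset.sum_const, Nat.card_Icc]
                  simp [nsmul_eq_mul]
        _ ≤ η * ((N : ℝ) * (B * (B * ((N : ℝ) * η * B)))) := by
            refine mul_le_mul_of_nonneg_left ?_ (le_of_lt hη)
            refine mul_le_mul_of_nonneg_right ?_ ?_
            · exact_mod_cast hmN
            · positivity
        _ = B ^ 3 * (N : ℝ) ^ 2 * η ^ 2 := by ring
    calc ‖_ + _‖ ≤ _ + _ := norm_add_le _ _
      _ ≤ B ^ 3 * (N : ℝ) ^ 2 * η ^ 2 + B ^ 3 * (N : ℝ) ^ 2 * η ^ 2 := add_le_add h1 h2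
      _ = 2 * B ^ 3 * (N : ℝ) ^ 2 * η ^ 2 := by ring
  -- Step D: the exact identity
  have hkey : θ (N + 1) -
      (θ1 - η • ∑ j ∈ Finset.Icc 1 N, g j θ1
        + (η ^ 2) • ∑ j ∈ Finset.Icc 1 N, ∑ k ∈ Finset.Ico 1 j, (H j) (g k θ1))
      = -(η • ∑ j ∈ Finset.Icc 1 N, r j) := by
    rw [tele N le_rfl]
    have hsum : ∑ j ∈ Finset.Icc 1 N, r j
        = ∑ j ∈ Finset.Icc 1 N, g j (θ j) - ∑ j ∈ Finset.Icc 1 N, g j θ1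
          + η • ∑ j ∈ Finset.Icc 1 N, ∑ k ∈ Finset.Ico 1 j, (H j) (g k θ1) := by
      simp only [hrdef]
      rw [Finset.sum_add_distrib, Finset.sum_sub_distrib, ← Finset.smul_sum]
    rw [hsum, smul_add, smul_sub, smul_smul, show η * η = η ^ 2 by ring]
    abel
  rw [hkey]
  calc ‖-(η • ∑ j ∈ Finset.Icc 1 N, r j)‖
      = η * ‖∑ j ∈ Finset.Icc 1 N, r j‖ := by
        rw [norm_neg, norm_smul, Real.norm_eq_abs, abs_of_pos hη]
    _ ≤ η * ∑ j ∈ Finset.Icc 1 N, ‖r j‖ :=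
        mul_le_mul_of_nonneg_left (norm_sum_le _ _) (le_of_lt hη)
    _ ≤ η * ((N : ℝ) * (2 * B ^ 3 * (N : ℝ) ^ 2 * η ^ 2)) := by
        refine mul_le_mul_of_nonneg_left ?_ (le_of_lt hη)
        calc ∑ j ∈ Finset.Icc 1 N, ‖r j‖
            ≤ ∑ _j ∈ Finset.Icc 1 N, 2 * B ^ 3 * (N : ℝ) ^ 2 * η ^ 2 :=
              Finset.sum_le_sum hrbound
          _ = (N : ℝ) * (2 * B ^ 3 * (N : ℝ) ^ 2 * η ^ 2) := by
              rw [Finset.sum_const, Nat.card_Icc]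
              simp [nsmul_eq_mul]
    _ = 2 * B ^ 3 * (N : ℝ) ^ 3 * η ^ 3 := by ring
end

section
/- For SGD with a possibly biased batch-sampling distribution and M-Lipschitz gradient, min_{k=1,...,t} E‖∇L̂(θ_k)‖² ≤ (L̂(θ_1) − L̂*)/(Σ η_k) + (M/2)·(Σ η_k² E‖∇L̂_{i_k}(θ_k)‖²)/(Σ η_k) − E[ (Σ_{k=1}^t η_k ∇L̂(θ_k)ᵀ( E[∇L̂_{i_k}(θ_k) | θ_k] − ∇L̂(θ_k) ))/(Σ_{k=1}^t η_k) ]. -/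
open MeasureTheory ProbabilityTheory
open scoped RealInnerProductSpace

lemma descent_aux {E : Type*} [NormedAddCommGroup E] [InnerProductSpace ℝ E]
    [CompleteSpace E] {f : E → ℝ} (hf : Differentiable ℝ f) {M : ℝ} (hM : 0 ≤ M)
    (hlip : LipschitzWith (Real.toNNReal M) (gradient f)) (x v : E) :
    f (x + v) ≤ f x + ⟪gradient f x, v⟫ + M / 2 * ‖v‖ ^ 2 := by
  have hgc : Continuous (gradient f) := hlip.continuous
  have hd : ∀ s : ℝ, HasDerivAt (fun r : ℝ => f (x + r • v))
      ⟪gradient f (x + s • v), v⟫ s := by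
    intro s
    have h1 : HasDerivAt (fun r : ℝ => x + r • v) v s := by
      simpa using ((hasDerivAt_id s).smul_const v).const_add x
    have h2 := ((hf (x + s • v)).hasGradientAt).hasFDerivAt
    have h3 := h2.comp_hasDerivAt s h1
    rw [InnerProductSpace.toDual_apply_apply] at h3
    exact h3
  have c1 : Continuous fun s : ℝ => gradient f (x + s • v) :=
    hgc.comp (continuous_const.add (continuous_id.smul continuous_const))
  have cont : Continuous fun s : ℝ => ⟪gradient f (x + s • v), v⟫ :=
    c1.inner continuous_const
  have hftc : ∫ s in (0:ℝ)..1, ⟪gradient f (x + s • v), v⟫ = f (x + v) - f x := by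
    have := intervalIntegral.integral_eq_sub_of_hasDerivAt
      (fun s _ => hd s) (cont.intervalIntegrable 0 1)
    simpa using this
  have hb : ∀ s ∈ Set.Icc (0:ℝ) 1,
      ⟪gradient f (x + s • v), v⟫ ≤ ⟪gradient f x, v⟫ + M * s * ‖v‖ ^ 2 := by
    intro s hs
    have h1 : ⟪gradient f (x + s • v), v⟫
        = ⟪gradient f x, v⟫ + ⟪gradient f (x + s • v) - gradient f x, v⟫ := by
      rw [inner_sub_left]; ring
    rw [h1]
    have h2 : ‖gradient f (x + s • v) - gradient f x‖ ≤ M * (s * ‖v‖) := by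
      have := hlip.dist_le_mul (x + s • v) x
      rw [dist_eq_norm] at this
      simpa [Real.coe_toNNReal M hM, norm_smul, abs_of_nonneg hs.1, mul_assoc] using this
    have h3 : ⟪gradient f (x + s • v) - gradient f x, v⟫
        ≤ ‖gradient f (x + s • v) - gradient f x‖ * ‖v‖ := real_inner_le_norm _ _
    nlinarith [norm_nonneg v, norm_nonneg (gradient f (x + s • v) - gradient f x)]
  have hmono : ∫ s in (0:ℝ)..1, ⟪gradient f (x + s • v), v⟫
      ≤ ∫ s in (0:ℝ)..1, (⟪gradient f x, v⟫ + M * s * ‖v‖ ^ 2) := by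
    apply intervalIntegral.integral_mono_on (by norm_num)
      (cont.intervalIntegrable 0 1)
      ((continuous_const.add ((continuous_const.mul continuous_id).mul
        continuous_const)).intervalIntegrable 0 1) hb
  have hcomp : ∫ s in (0:ℝ)..1, (⟪gradient f x, v⟫ + M * s * ‖v‖ ^ 2)
      = ⟪gradient f x, v⟫ + M / 2 * ‖v‖ ^ 2 := by
    have h4 : (fun s : ℝ => ⟪gradient f x, v⟫ + M * s * ‖v‖ ^ 2)
        = fun s : ℝ => ⟪gradient f x, v⟫ + (M * ‖v‖ ^ 2) * s := by ext s; ring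
    rw [h4, intervalIntegral.integral_add (g := fun s : ℝ => M * ‖v‖ ^ 2 * s)
      (intervalIntegrable_const)
      ((continuous_const.mul continuous_id').intervalIntegrable 0 1),
      intervalIntegral.integral_const_mul, integral_id]
    simp; ring
  rw [hftc] at hmono
  rw [hcomp] at hmono
  linarith

lemma measurable_comp_finite {Ω γ E' : Type*} [MeasurableSpace Ω] [MeasurableSpace γ]
    [MeasurableSingletonClass γ] [MeasurableSpace E']
    {ψ : Ω → γ} (hψ : Measurable ψ) (T : Finset γ) (hT : ∀ ω, ψ ω ∈ T)
    (Φ : γ → E') : Measurable fun ω => Φ (ψ ω) := by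
  intro U hU
  have h1 : (fun ω => Φ (ψ ω)) ⁻¹' U = ψ ⁻¹' (↑T ∩ Φ ⁻¹' U) := by
    ext ω; simp [Set.mem_preimage, hT ω]
  rw [h1]
  exact hψ ((T.finite_toSet.inter_of_left _).measurableSet)

lemma sm_of_finset_range {Ω : Type*} [MeasurableSpace Ω] {E : Type*} [NormedAddCommGroup E]
    [MeasurableSpace E] [BorelSpace E] {f : Ω → E} (hf : Measurable f)
    (T : Finset E) (hT : ∀ ω, f ω ∈ T) : StronglyMeasurable f := by
  rw [stronglyMeasurable_iff_measurable_separable]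
  refine ⟨hf, (T.finite_toSet.isSeparable).mono ?_⟩
  rintro y ⟨ω, rfl⟩; exact hT ω

lemma integrableE_of_finset_range {Ω : Type*} [MeasurableSpace Ω] (P : Measure Ω)
    [IsFiniteMeasure P] {E : Type*} [NormedAddCommGroup E] {f : Ω → E}
    (hf : AEStronglyMeasurable f P)
    (T : Finset E) (hT : ∀ ω, f ω ∈ T) : Integrable f P := by
  refine Integrable.mono' (integrable_const (∑ y ∈ T, ‖y‖)) hf (ae_of_all _ fun ω => ?_)
  exact Finset.single_le_sum (fun y _ => norm_nonneg y) (hT ω)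

lemma pullout {E : Type*} [NormedAddCommGroup E] [InnerProductSpace ℝ E]
    [CompleteSpace E] [MeasurableSpace E] [BorelSpace E]
    {Ω : Type*} [mΩ : MeasurableSpace Ω] (P : Measure Ω) [IsFiniteMeasure P]
    (X : Ω → E) (hX : Measurable X) (S : Finset E) (hS : ∀ ω, X ω ∈ S)
    (q : E → E) (g : Ω → E) (hg : Integrable g P) :
    ∫ ω, ⟪q (X ω), (P[g | MeasurableSpace.comap X inferInstance]) ω⟫ ∂P
      = ∫ ω, ⟪q (X ω), g ω⟫ ∂P := by
  have hm : MeasurableSpace.comap X inferInstance ≤ mΩ := hX.comap_le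
  haveI : SigmaFinite (P.trim hm) := by
    haveI := isFiniteMeasure_trim hm (μ := P)
    infer_instance
  have key : ∀ (f : Ω → E), Integrable f P →
      ∫ ω, ⟪q (X ω), f ω⟫ ∂P = ∑ s ∈ S, ⟪q s, ∫ ω in X ⁻¹' {s}, f ω ∂P⟫ := by
    intro f hf
    have hrep : ∀ ω, ⟪q (X ω), f ω⟫
        = ∑ s ∈ S, (X ⁻¹' {s}).indicator (fun ω' => ⟪q s, f ω'⟫) ω := by
      intro ω
      rw [Finset.sum_eq_single (X ω)]
      · simp [Set.indicator_of_mem, Set.mem_preimage]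
      · intro b _ hb
        apply Set.indicator_of_notMem
        simp [Set.mem_preimage]
        exact fun h => hb (h ▸ rfl)
      · intro h; exact absurd (hS ω) h
    calc ∫ ω, ⟪q (X ω), f ω⟫ ∂P
        = ∫ ω, ∑ s ∈ S, (X ⁻¹' {s}).indicator (fun ω' => ⟪q s, f ω'⟫) ω ∂P := by
          exact integral_congr_ae (ae_of_all _ hrep)
      _ = ∑ s ∈ S, ∫ ω, (X ⁻¹' {s}).indicator (fun ω' => ⟪q s, f ω'⟫) ω ∂P := by
          refine integral_finset_sum S fun s _ => ?_
          exact (hf.const_inner (q s)).indicator (hX (measurableSet_singleton s))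
      _ = ∑ s ∈ S, ∫ ω in X ⁻¹' {s}, ⟪q s, f ω⟫ ∂P := by
          refine Finset.sum_congr rfl fun s _ => ?_
          exact integral_indicator (hX (measurableSet_singleton s))
      _ = ∑ s ∈ S, ⟪q s, ∫ ω in X ⁻¹' {s}, f ω ∂P⟫ := by
          refine Finset.sum_congr rfl fun s _ => ?_
          exact integral_inner hf.restrict (q s)
  rw [key _ integrable_condExp, key g hg]
  refine Finset.sum_congr rfl fun s _ => ?_
  congr 1
  exact setIntegral_condExp hm hg ⟨{s}, measurableSet_singleton s, rfl⟩

/-- t-step bound for SGD with possibly biased batch sampling,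
with the additional bias term involving the conditional expectation of the
sampled gradient given the current iterate. -/
theorem stmt5 {E : Type*} [NormedAddCommGroup E] [InnerProductSpace ℝ E]
    [CompleteSpace E] [MeasurableSpace E] [BorelSpace E]
    {N : ℕ} (hN : 0 < N)
    (L : Fin N → E → ℝ) (hdiff : ∀ i, Differentiable ℝ (L i))
    (Lhat : E → ℝ) (hLhat : Lhat = fun x => (N : ℝ)⁻¹ * ∑ i : Fin N, L i x)
    (M : ℝ) (hM : 0 < M)
    (hlip : LipschitzWith (Real.toNNReal M) (gradient Lhat))
    (Lstar : ℝ) (hbdd : ∀ x, Lstar ≤ Lhat x) (hstar : Lstar = ⨅ x, Lhat x)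
    {Ω : Type*} [MeasurableSpace Ω] (P : Measure Ω) [IsProbabilityMeasure P]
    (i : ℕ → Ω → Fin N) (hmeas : ∀ k, Measurable (i k))
    (η : ℕ → ℝ) (hη : ∀ k, 0 < η k)
    (θ1 : E) (θ : Ω → ℕ → E) (hθmeas : ∀ k, Measurable fun ω => θ ω k)
    (hinit : ∀ ω, θ ω 1 = θ1)
    (hupd : ∀ ω k, θ ω (k + 1) = θ ω k - η k • gradient (L (i k ω)) (θ ω k))
    (t : ℕ) (ht : 1 ≤ t) (htne : (Finset.Icc 1 t).Nonempty) :
    (Finset.Icc 1 t).inf' htne (fun k => ∫ ω, ‖gradient Lhat (θ ω k)‖ ^ 2 ∂P)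
      ≤ (Lhat θ1 - Lstar) / (∑ k ∈ Finset.Icc 1 t, η k)
        + M / 2 * (∑ k ∈ Finset.Icc 1 t,
              η k ^ 2 * ∫ ω, ‖gradient (L (i k ω)) (θ ω k)‖ ^ 2 ∂P)
            / (∑ k ∈ Finset.Icc 1 t, η k)
        - ∫ ω, (∑ k ∈ Finset.Icc 1 t, η k *
              ⟪gradient Lhat (θ ω k),
                (P[(fun ω' => gradient (L (i k ω')) (θ ω' k)) |
                    MeasurableSpace.comap (fun ω' => θ ω' k) inferInstance]) ω
                  - gradient Lhat (θ ω k)⟫)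
            / (∑ k ∈ Finset.Icc 1 t, η k) ∂P := by
  classical
  haveI hSing : MeasurableSingletonClass E := ⟨fun x => isClosed_singleton.measurableSet⟩
  have hMnn : (0:ℝ) ≤ M := hM.le
  have hLd : Differentiable ℝ Lhat := by
    rw [hLhat]
    exact (Differentiable.fun_sum fun j _ => hdiff j).const_mul _
  have hA : 0 < ∑ k ∈ Finset.Icc 1 t, η k := Finset.sum_pos (fun k _ => hη k) htne
  -- finite range of the iterates
  have hθS' : ∀ n : ℕ, ∃ S : Finset E, ∀ ω, θ ω (n + 1) ∈ S := by
    intro n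
    induction n with
    | zero => exact ⟨{θ1}, fun ω => by rw [hinit ω]; exact Finset.mem_singleton_self _⟩
    | succ n ih =>
      obtain ⟨S, hS⟩ := ih
      refine ⟨(S ×ˢ (Finset.univ : Finset (Fin N))).image
        (fun p : E × Fin N => p.1 - η (n+1) • gradient (L p.2) p.1), fun ω => ?_⟩
      rw [hupd ω (n+1)]
      exact Finset.mem_image.2 ⟨(θ ω (n+1), i (n+1) ω),
        Finset.mem_product.2 ⟨hS ω, Finset.mem_univ _⟩, rfl⟩
  choose S0 hS0 using hθS'
  have hSθ : ∀ k, 1 ≤ k → ∀ ω, θ ω k ∈ S0 (k - 1) := by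
    intro k hk ω
    have := hS0 (k - 1) ω
    rwa [Nat.sub_add_cancel hk] at this
  have hmeasP : ∀ k, Measurable fun ω => (θ ω k, i k ω) :=
    fun k => (hθmeas k).prodMk (hmeas k)
  have hmemP : ∀ k, 1 ≤ k → ∀ ω,
      (θ ω k, i k ω) ∈ (S0 (k-1)) ×ˢ (Finset.univ : Finset (Fin N)) :=
    fun k hk ω => Finset.mem_product.2 ⟨hSθ k hk ω, Finset.mem_univ _⟩
  -- generic integrability / strong measurability machines
  have mk_meas : ∀ k, 1 ≤ k → ∀ {E' : Type} [MeasurableSpace E'] (Φ : E × Fin N → E'),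
      Measurable fun ω => Φ (θ ω k, i k ω) := by
    intro k hk E' _ Φ
    exact measurable_comp_finite (hmeasP k) _ (hmemP k hk) Φ
  have mk_int : ∀ k, 1 ≤ k → ∀ Φ : E × Fin N → ℝ,
      Integrable (fun ω => Φ (θ ω k, i k ω)) P := by
    intro k hk Φ
    refine integrableE_of_finset_range P
      (measurable_comp_finite (hmeasP k) _ (hmemP k hk) Φ).aestronglyMeasurable
      (((S0 (k-1)) ×ˢ (Finset.univ : Finset (Fin N))).image Φ)
      (fun ω => Finset.mem_image_of_mem _ (hmemP k hk ω))
  have mk_sm : ∀ k, 1 ≤ k → ∀ Φ : E × Fin N → E,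
      StronglyMeasurable fun ω => Φ (θ ω k, i k ω) := by
    intro k hk Φ
    exact sm_of_finset_range (measurable_comp_finite (hmeasP k) _ (hmemP k hk) Φ)
      (((S0 (k-1)) ×ˢ (Finset.univ : Finset (Fin N))).image Φ)
      (fun ω => Finset.mem_image_of_mem _ (hmemP k hk ω))
  have mk_intE : ∀ k, 1 ≤ k → ∀ Φ : E × Fin N → E,
      Integrable (fun ω => Φ (θ ω k, i k ω)) P := by
    intro k hk Φ
    refine integrableE_of_finset_range P (mk_sm k hk Φ).aestronglyMeasurable
      (((S0 (k-1)) ×ˢ (Finset.univ : Finset (Fin N))).image Φ)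
      (fun ω => Finset.mem_image_of_mem _ (hmemP k hk ω))
  -- the concrete integrable integrands
  have hi1 : ∀ k, 1 ≤ k → Integrable (fun ω => ‖gradient Lhat (θ ω k)‖ ^ 2) P :=
    fun k hk => mk_int k hk (fun p => ‖gradient Lhat p.1‖ ^ 2)
  have hi2 : ∀ k, 1 ≤ k → Integrable (fun ω => ‖gradient (L (i k ω)) (θ ω k)‖ ^ 2) P :=
    fun k hk => mk_int k hk (fun p => ‖gradient (L p.2) p.1‖ ^ 2)
  have hiGg : ∀ k, 1 ≤ k → Integrable
      (fun ω => (⟪gradient Lhat (θ ω k), gradient (L (i k ω)) (θ ω k)⟫ : ℝ)) P :=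
    fun k hk => mk_int k hk (fun p => ⟪gradient Lhat p.1, gradient (L p.2) p.1⟫)
  have hiGG : ∀ k, 1 ≤ k → Integrable
      (fun ω => (⟪gradient Lhat (θ ω k), gradient Lhat (θ ω k)⟫ : ℝ)) P :=
    fun k hk => mk_int k hk (fun p => ⟪gradient Lhat p.1, gradient Lhat p.1⟫)
  have hiθL : ∀ k, 1 ≤ k → Integrable (fun ω => Lhat (θ ω k)) P :=
    fun k hk => mk_int k hk (fun p => Lhat p.1)
  have hig : ∀ k, 1 ≤ k →
      Integrable (fun ω => gradient (L (i k ω)) (θ ω k)) P :=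
    fun k hk => mk_intE k hk (fun p => gradient (L p.2) p.1)
  have hsG : ∀ k, 1 ≤ k → StronglyMeasurable fun ω => gradient Lhat (θ ω k) :=
    fun k hk => mk_sm k hk (fun p => gradient Lhat p.1)
  have hGmem : ∀ k, 1 ≤ k → ∀ ω,
      gradient Lhat (θ ω k) ∈ (S0 (k-1)).image (gradient Lhat) :=
    fun k hk ω => Finset.mem_image_of_mem _ (hSθ k hk ω)
  -- condexp-related integrability
  have hiGE : ∀ k, 1 ≤ k → Integrable (fun ω =>
      (⟪gradient Lhat (θ ω k),
        (P[(fun ω' => gradient (L (i k ω')) (θ ω' k)) |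
            MeasurableSpace.comap (fun ω' => θ ω' k) inferInstance]) ω⟫ : ℝ)) P := by
    intro k hk
    set C : ℝ := ∑ v ∈ (S0 (k-1)).image (gradient Lhat), ‖v‖ with hC_def
    have hsm : AEStronglyMeasurable (fun ω =>
        (⟪gradient Lhat (θ ω k),
          (P[(fun ω' => gradient (L (i k ω')) (θ ω' k)) |
              MeasurableSpace.comap (fun ω' => θ ω' k) inferInstance]) ω⟫ : ℝ)) P :=
      (continuous_inner.comp_stronglyMeasurable ((hsG k hk).prodMk
        (stronglyMeasurable_condExp.mono ((hθmeas k).comap_le)))).aestronglyMeasurable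
    have hEint : Integrable (P[(fun ω' => gradient (L (i k ω')) (θ ω' k)) |
        MeasurableSpace.comap (fun ω' => θ ω' k) inferInstance]) P := integrable_condExp
    refine Integrable.mono' (hEint.norm.const_mul C) hsm (ae_of_all _ fun ω => ?_)
    have hC : ‖gradient Lhat (θ ω k)‖ ≤ C :=
      Finset.single_le_sum (fun v _ => norm_nonneg v) (hGmem k hk ω)
    have hstep : ‖(⟪gradient Lhat (θ ω k),
        (P[(fun ω' => gradient (L (i k ω')) (θ ω' k)) |
            MeasurableSpace.comap (fun ω' => θ ω' k) inferInstance]) ω⟫ : ℝ)‖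
        ≤ ‖gradient Lhat (θ ω k)‖ * ‖(P[(fun ω' => gradient (L (i k ω')) (θ ω' k)) |
            MeasurableSpace.comap (fun ω' => θ ω' k) inferInstance]) ω‖ := by
      rw [Real.norm_eq_abs]; exact abs_real_inner_le_norm _ _
    exact hstep.trans (mul_le_mul_of_nonneg_right hC (norm_nonneg _))
  have hi4 : ∀ k, 1 ≤ k → Integrable (fun ω =>
      (⟪gradient Lhat (θ ω k),
        (P[(fun ω' => gradient (L (i k ω')) (θ ω' k)) |
            MeasurableSpace.comap (fun ω' => θ ω' k) inferInstance]) ω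
          - gradient Lhat (θ ω k)⟫ : ℝ)) P := by
    intro k hk
    have heq : (fun ω =>
        (⟪gradient Lhat (θ ω k),
          (P[(fun ω' => gradient (L (i k ω')) (θ ω' k)) |
              MeasurableSpace.comap (fun ω' => θ ω' k) inferInstance]) ω
            - gradient Lhat (θ ω k)⟫ : ℝ))
        = fun ω =>
          (⟪gradient Lhat (θ ω k),
            (P[(fun ω' => gradient (L (i k ω')) (θ ω' k)) |
                MeasurableSpace.comap (fun ω' => θ ω' k) inferInstance]) ω⟫ : ℝ)
          - ⟪gradient Lhat (θ ω k), gradient Lhat (θ ω k)⟫ := by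
      funext ω; rw [inner_sub_right]
    rw [heq]
    exact (hiGE k hk).sub (hiGG k hk)
  -- pointwise descent inequality, integrated, per step
  have hkey : ∀ k, 1 ≤ k →
      η k * ∫ ω, ‖gradient Lhat (θ ω k)‖ ^ 2 ∂P
        + η k * ((∫ ω, (⟪gradient Lhat (θ ω k), gradient (L (i k ω)) (θ ω k)⟫ : ℝ) ∂P)
            - ∫ ω, (⟪gradient Lhat (θ ω k), gradient Lhat (θ ω k)⟫ : ℝ) ∂P)
      ≤ ((∫ ω, Lhat (θ ω k) ∂P) - ∫ ω, Lhat (θ ω (k+1)) ∂P)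
          + M / 2 * η k ^ 2 * ∫ ω, ‖gradient (L (i k ω)) (θ ω k)‖ ^ 2 ∂P := by
    intro k hk
    have hpt : ∀ ω,
        η k * ‖gradient Lhat (θ ω k)‖ ^ 2
          + η k * ((⟪gradient Lhat (θ ω k), gradient (L (i k ω)) (θ ω k)⟫ : ℝ)
              - ⟪gradient Lhat (θ ω k), gradient Lhat (θ ω k)⟫)
        ≤ (Lhat (θ ω k) - Lhat (θ ω (k+1)))
            + M / 2 * η k ^ 2 * ‖gradient (L (i k ω)) (θ ω k)‖ ^ 2 := by
      intro ω
      have hdes := descent_aux hLd hMnn hlip (θ ω k)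
        (-(η k • gradient (L (i k ω)) (θ ω k)))
      have hx : θ ω k + -(η k • gradient (L (i k ω)) (θ ω k)) = θ ω (k+1) := by
        rw [hupd ω k, sub_eq_add_neg]
      rw [hx] at hdes
      have h1 : (⟪gradient Lhat (θ ω k), -(η k • gradient (L (i k ω)) (θ ω k))⟫ : ℝ)
          = -(η k * ⟪gradient Lhat (θ ω k), gradient (L (i k ω)) (θ ω k)⟫) := by
        rw [inner_neg_right, real_inner_smul_right]
      have h2 : ‖-(η k • gradient (L (i k ω)) (θ ω k))‖ ^ 2
          = η k ^ 2 * ‖gradient (L (i k ω)) (θ ω k)‖ ^ 2 := by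
        rw [norm_neg, norm_smul, Real.norm_eq_abs, mul_pow, sq_abs]
      rw [h1, h2] at hdes
      have h3 : (⟪gradient Lhat (θ ω k), gradient Lhat (θ ω k)⟫ : ℝ)
          = ‖gradient Lhat (θ ω k)‖ ^ 2 := real_inner_self_eq_norm_sq _
      rw [h3]
      nlinarith [hdes]
    have hIL1 : Integrable (fun ω => η k * ‖gradient Lhat (θ ω k)‖ ^ 2) P :=
      (hi1 k hk).const_mul _
    have hIL2 : Integrable (fun ω =>
        η k * ((⟪gradient Lhat (θ ω k), gradient (L (i k ω)) (θ ω k)⟫ : ℝ)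
            - ⟪gradient Lhat (θ ω k), gradient Lhat (θ ω k)⟫)) P :=
      ((hiGg k hk).sub (hiGG k hk)).const_mul _
    have hIR1 : Integrable (fun ω => Lhat (θ ω k) - Lhat (θ ω (k+1))) P :=
      (hiθL k hk).sub (hiθL (k+1) (by omega))
    have hIR2 : Integrable (fun ω =>
        M / 2 * η k ^ 2 * ‖gradient (L (i k ω)) (θ ω k)‖ ^ 2) P :=
      (hi2 k hk).const_mul _
    have hIL : Integrable (fun ω => η k * ‖gradient Lhat (θ ω k)‖ ^ 2
        + η k * ((⟪gradient Lhat (θ ω k), gradient (L (i k ω)) (θ ω k)⟫ : ℝ)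
            - ⟪gradient Lhat (θ ω k), gradient Lhat (θ ω k)⟫)) P := hIL1.add hIL2
    have hIR : Integrable (fun ω => (Lhat (θ ω k) - Lhat (θ ω (k+1)))
        + M / 2 * η k ^ 2 * ‖gradient (L (i k ω)) (θ ω k)‖ ^ 2) P := hIR1.add hIR2
    have h0 := integral_mono hIL hIR hpt
    have hLe : ∫ ω, (η k * ‖gradient Lhat (θ ω k)‖ ^ 2
        + η k * ((⟪gradient Lhat (θ ω k), gradient (L (i k ω)) (θ ω k)⟫ : ℝ)
            - ⟪gradient Lhat (θ ω k), gradient Lhat (θ ω k)⟫)) ∂P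
        = η k * ∫ ω, ‖gradient Lhat (θ ω k)‖ ^ 2 ∂P
          + η k * ((∫ ω, (⟪gradient Lhat (θ ω k), gradient (L (i k ω)) (θ ω k)⟫ : ℝ) ∂P)
              - ∫ ω, (⟪gradient Lhat (θ ω k), gradient Lhat (θ ω k)⟫ : ℝ) ∂P) := by
      rw [integral_add hIL1 hIL2, integral_const_mul, integral_const_mul,
        integral_sub (hiGg k hk) (hiGG k hk)]
    have hRe : ∫ ω, ((Lhat (θ ω k) - Lhat (θ ω (k+1)))
        + M / 2 * η k ^ 2 * ‖gradient (L (i k ω)) (θ ω k)‖ ^ 2) ∂P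
        = ((∫ ω, Lhat (θ ω k) ∂P) - ∫ ω, Lhat (θ ω (k+1)) ∂P)
          + M / 2 * η k ^ 2 * ∫ ω, ‖gradient (L (i k ω)) (θ ω k)‖ ^ 2 ∂P := by
      rw [integral_add hIR1 hIR2, integral_sub (hiθL k hk) (hiθL (k+1) (by omega)),
        integral_const_mul]
    rw [hLe, hRe] at h0
    exact h0
  -- sum over k
  have hsum : ∑ k ∈ Finset.Icc 1 t,
      (η k * ∫ ω, ‖gradient Lhat (θ ω k)‖ ^ 2 ∂P
        + η k * ((∫ ω, (⟪gradient Lhat (θ ω k), gradient (L (i k ω)) (θ ω k)⟫ : ℝ) ∂P)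
            - ∫ ω, (⟪gradient Lhat (θ ω k), gradient Lhat (θ ω k)⟫ : ℝ) ∂P))
      ≤ ∑ k ∈ Finset.Icc 1 t,
        (((∫ ω, Lhat (θ ω k) ∂P) - ∫ ω, Lhat (θ ω (k+1)) ∂P)
          + M / 2 * η k ^ 2 * ∫ ω, ‖gradient (L (i k ω)) (θ ω k)‖ ^ 2 ∂P) :=
    Finset.sum_le_sum fun k hk => hkey k (Finset.mem_Icc.1 hk).1
  rw [Finset.sum_add_distrib, Finset.sum_add_distrib] at hsum
  have tele : ∑ k ∈ Finset.Icc 1 t, ((∫ ω, Lhat (θ ω k) ∂P) - ∫ ω, Lhat (θ ω (k+1)) ∂P)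
      = (∫ ω, Lhat (θ ω 1) ∂P) - ∫ ω, Lhat (θ ω (t+1)) ∂P := by
    rw [← Finset.Ico_add_one_right_eq_Icc, Finset.sum_Ico_eq_sum_range]
    simpa [Nat.add_comm] using Finset.sum_range_sub' (fun n => ∫ ω, Lhat (θ ω (1 + n)) ∂P) t
  have ha1 : ∫ ω, Lhat (θ ω 1) ∂P = Lhat θ1 := by
    simp only [hinit]
    simp
  have ha2 : Lstar ≤ ∫ ω, Lhat (θ ω (t+1)) ∂P := by
    have h0 : (Lstar : ℝ) = ∫ _ω, Lstar ∂P := by simp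
    rw [h0]
    exact integral_mono (integrable_const _) (hiθL (t+1) (by omega)) fun ω => hbdd _
  rw [tele, ha1] at hsum
  -- pullout of the conditional expectation
  have hpull : ∀ k, 1 ≤ k →
      ∫ ω, (⟪gradient Lhat (θ ω k), gradient (L (i k ω)) (θ ω k)⟫ : ℝ) ∂P
        = ∫ ω, (⟪gradient Lhat (θ ω k),
            (P[(fun ω' => gradient (L (i k ω')) (θ ω' k)) |
                MeasurableSpace.comap (fun ω' => θ ω' k) inferInstance]) ω⟫ : ℝ) ∂P := by
    intro k hk
    exact (pullout P (fun ω' => θ ω' k) (hθmeas k) (S0 (k-1)) (hSθ k hk)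
      (gradient Lhat) (fun ω' => gradient (L (i k ω')) (θ ω' k)) (hig k hk)).symm
  have h4eq : ∀ k, 1 ≤ k →
      ∫ ω, (⟪gradient Lhat (θ ω k),
          (P[(fun ω' => gradient (L (i k ω')) (θ ω' k)) |
              MeasurableSpace.comap (fun ω' => θ ω' k) inferInstance]) ω
            - gradient Lhat (θ ω k)⟫ : ℝ) ∂P
        = (∫ ω, (⟪gradient Lhat (θ ω k),
            (P[(fun ω' => gradient (L (i k ω')) (θ ω' k)) |
                MeasurableSpace.comap (fun ω' => θ ω' k) inferInstance]) ω⟫ : ℝ) ∂P)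
          - ∫ ω, (⟪gradient Lhat (θ ω k), gradient Lhat (θ ω k)⟫ : ℝ) ∂P := by
    intro k hk
    rw [← integral_sub (hiGE k hk) (hiGG k hk)]
    refine integral_congr_ae (ae_of_all _ fun ω => ?_)
    simp only [inner_sub_right]
  have hbias : ∑ k ∈ Finset.Icc 1 t,
      η k * ((∫ ω, (⟪gradient Lhat (θ ω k), gradient (L (i k ω)) (θ ω k)⟫ : ℝ) ∂P)
          - ∫ ω, (⟪gradient Lhat (θ ω k), gradient Lhat (θ ω k)⟫ : ℝ) ∂P)
      = ∑ k ∈ Finset.Icc 1 t, η k * ∫ ω, (⟪gradient Lhat (θ ω k),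
          (P[(fun ω' => gradient (L (i k ω')) (θ ω' k)) |
              MeasurableSpace.comap (fun ω' => θ ω' k) inferInstance]) ω
            - gradient Lhat (θ ω k)⟫ : ℝ) ∂P := by
    refine Finset.sum_congr rfl fun k hk => ?_
    have hk1 := (Finset.mem_Icc.1 hk).1
    rw [hpull k hk1, ← h4eq k hk1]
  rw [hbias] at hsum
  -- rewrite the last integral in the goal
  have hlast : ∫ ω, (∑ k ∈ Finset.Icc 1 t, η k *
        ⟪gradient Lhat (θ ω k),
          (P[(fun ω' => gradient (L (i k ω')) (θ ω' k)) |
              MeasurableSpace.comap (fun ω' => θ ω' k) inferInstance]) ω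
            - gradient Lhat (θ ω k)⟫) / (∑ k ∈ Finset.Icc 1 t, η k) ∂P
      = (∑ k ∈ Finset.Icc 1 t, η k * ∫ ω, (⟪gradient Lhat (θ ω k),
          (P[(fun ω' => gradient (L (i k ω')) (θ ω' k)) |
              MeasurableSpace.comap (fun ω' => θ ω' k) inferInstance]) ω
            - gradient Lhat (θ ω k)⟫ : ℝ) ∂P) / (∑ k ∈ Finset.Icc 1 t, η k) := by
    rw [integral_div]
    congr 1
    rw [integral_finset_sum _ fun k hk => (hi4 k (Finset.mem_Icc.1 hk).1).const_mul _]
    exact Finset.sum_congr rfl fun k hk => integral_const_mul _ _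
  rw [hlast]
  -- final arithmetic
  have hconv : ∑ k ∈ Finset.Icc 1 t,
      M / 2 * η k ^ 2 * ∫ ω, ‖gradient (L (i k ω)) (θ ω k)‖ ^ 2 ∂P
      = M / 2 * ∑ k ∈ Finset.Icc 1 t,
          η k ^ 2 * ∫ ω, ‖gradient (L (i k ω)) (θ ω k)‖ ^ 2 ∂P := by
    rw [Finset.mul_sum]
    exact Finset.sum_congr rfl fun k _ => by ring
  rw [hconv] at hsum
  have h5 : ((Finset.Icc 1 t).inf' htne fun k => ∫ ω, ‖gradient Lhat (θ ω k)‖ ^ 2 ∂P)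
      * (∑ k ∈ Finset.Icc 1 t, η k)
      ≤ ∑ k ∈ Finset.Icc 1 t, η k * ∫ ω, ‖gradient Lhat (θ ω k)‖ ^ 2 ∂P := by
    rw [Finset.mul_sum]
    refine Finset.sum_le_sum fun k hk => ?_
    rw [mul_comm]
    exact mul_le_mul_of_nonneg_left (Finset.inf'_le _ hk) (hη k).le
  have final : ((Finset.Icc 1 t).inf' htne fun k => ∫ ω, ‖gradient Lhat (θ ω k)‖ ^ 2 ∂P)
      ≤ ((Lhat θ1 - Lstar)
          + M / 2 * (∑ k ∈ Finset.Icc 1 t,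
              η k ^ 2 * ∫ ω, ‖gradient (L (i k ω)) (θ ω k)‖ ^ 2 ∂P)
          - ∑ k ∈ Finset.Icc 1 t, η k * ∫ ω, (⟪gradient Lhat (θ ω k),
              (P[(fun ω' => gradient (L (i k ω')) (θ ω' k)) |
                  MeasurableSpace.comap (fun ω' => θ ω' k) inferInstance]) ω
                - gradient Lhat (θ ω k)⟫ : ℝ) ∂P) / (∑ k ∈ Finset.Icc 1 t, η k) := by
    rw [le_div_iff₀ hA]
    linarith [h5, hsum, ha2]
  exact final.trans (le_of_eq (by ring))
end

section
/- With ξ̄ and ξ† as above (i.i.d. mean-μ, sd-σ variables; g bounded in [m, M] with m > 0; K_N ≥ 0 the normalized expected sum of standardized top order statistics), if (σ/μ)·K_N ≥ (M/m − 1) then E[ξ†] ≥ E[ξ̄]; that is, sorting the data in decreasing order increases the expected second-order SGD correction term. -/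
open MeasureTheory ProbabilityTheory Finset

lemma sq_decomp (F : ℝ → ℝ → ℝ) (hF : ∀ x y, F x y = F y x) (u : ℕ → ℝ) (n : ℕ) :
    ∑ j ∈ range n, ∑ k ∈ range n, F (u j) (u k)
      = 2 * (∑ j ∈ range n, ∑ k ∈ range j, F (u j) (u k)) + ∑ j ∈ range n, F (u j) (u j) := by
  induction n with
  | zero => simp
  | succ n ih =>
    have hsym : ∑ j ∈ range n, F (u j) (u n) = ∑ k ∈ range n, F (u n) (u k) :=
      Finset.sum_congr rfl (fun j _ => hF _ _)
    simp only [Finset.sum_range_succ, Finset.sum_add_distrib]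
    rw [ih]
    linarith [hsym]

lemma tri_perm {N : ℕ} (F : ℝ → ℝ → ℝ) (hF : ∀ x y, F x y = F y x) (v w : ℕ → ℝ)
    (e : Equiv.Perm (Fin N)) (h : ∀ i : Fin N, w i = v (e i)) :
    ∑ j ∈ range N, ∑ k ∈ range j, F (w j) (w k)
      = ∑ j ∈ range N, ∑ k ∈ range j, F (v j) (v k) := by
  have hsq : ∑ j ∈ range N, ∑ k ∈ range N, F (w j) (w k)
      = ∑ j ∈ range N, ∑ k ∈ range N, F (v j) (v k) := by
    rw [← Fin.sum_univ_eq_sum_range (fun j => ∑ k ∈ range N, F (w j) (w k)) N,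
        ← Fin.sum_univ_eq_sum_range (fun j => ∑ k ∈ range N, F (v j) (v k)) N]
    have : ∀ j : Fin N, ∑ k ∈ range N, F (w j) (w k) = ∑ k : Fin N, F (w j) (w k) :=
      fun j => (Fin.sum_univ_eq_sum_range (fun k => F (w j) (w k)) N).symm
    simp_rw [this]
    have : ∀ j : Fin N, ∑ k ∈ range N, F (v j) (v k) = ∑ k : Fin N, F (v j) (v k) :=
      fun j => (Fin.sum_univ_eq_sum_range (fun k => F (v j) (v k)) N).symm
    simp_rw [this, h]
    rw [← Equiv.sum_comp e (fun j => ∑ k : Fin N, F (v j) (v k))]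
    exact Finset.sum_congr rfl fun j _ =>
      Equiv.sum_comp e (fun k => F (v (e j)) (v k))
  have hdg : ∑ j ∈ range N, F (w j) (w j) = ∑ j ∈ range N, F (v j) (v j) := by
    rw [← Fin.sum_univ_eq_sum_range (fun j => F (w j) (w j)) N,
        ← Fin.sum_univ_eq_sum_range (fun j => F (v j) (v j)) N]
    simp_rw [h]
    exact Equiv.sum_comp e (fun j => F (v j) (v j))
  have h1 := sq_decomp F hF w N
  have h2 := sq_decomp F hF v N
  rw [h1, h2, hdg] at hsq
  linarith


lemma psi_nonneg (ν : Measure ℝ) [IsProbabilityMeasure ν]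
    (hint : Integrable (fun b => b) ν) (hμ : 0 ≤ ∫ b, b ∂ν)
    (a : ℝ) (p : ℝ → Prop) [DecidablePred p] (hp : MeasurableSet {b | p b})
    (h1 : ∀ b, ¬ p b → b ≤ a) (h2 : ∀ b, p b → a ≤ b) :
    0 ≤ ∫ b, (if p b then b else 0) ∂ν := by
  have hintif : Integrable (fun b => if p b then b else 0) ν := by
    refine Integrable.mono' hint.abs ?_ ?_
    · exact ((measurable_id.ite hp measurable_const)).aestronglyMeasurable
    · refine Filter.Eventually.of_forall (fun b => ?_)
      by_cases hb : p b <;> simp [hb, abs_nonneg, le_abs_self, abs_le_abs]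
  rcases le_or_gt a 0 with ha | ha
  · have hmono : ∀ b, b ≤ (if p b then b else 0) := by
      intro b
      by_cases hb : p b
      · simp [hb]
      · simp only [hb, if_false]
        exact le_trans (h1 b hb) ha |>.trans (le_refl 0) |>.trans (le_refl 0)
    calc (0:ℝ) ≤ ∫ b, b ∂ν := hμ
      _ ≤ ∫ b, (if p b then b else 0) ∂ν :=
        integral_mono hint hintif hmono
  · refine integral_nonneg (fun b => ?_)
    by_cases hb : p b
    · simp only [hb, if_true]; exact le_trans ha.le (h2 b hb)
    · simp [hb]

lemma pair_prod_nonneg (ν : Measure ℝ) [IsProbabilityMeasure ν]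
    (hint : Integrable (fun b => b) ν) (hμ : 0 ≤ ∫ b, b ∂ν)
    (g : ℝ → ℝ) (hg : Measurable g) (m M : ℝ) (hgm : ∀ x, m ≤ g x) (hgM : ∀ x, g x ≤ M) :
    0 ≤ ∫ p : ℝ × ℝ, (g (min p.1 p.2) - m) * max p.1 p.2 ∂(ν.prod ν) := by
  classical
  have hMm : (0:ℝ) ≤ M - m := by have := le_trans (hgm 0) (hgM 0); linarith
  set H₁ : ℝ × ℝ → ℝ := fun p => if p.1 ≤ p.2 then (g p.1 - m) * p.2 else 0 with hH₁
  set H₂ : ℝ × ℝ → ℝ := fun p => if p.2 < p.1 then (g p.2 - m) * p.1 else 0 with hH₂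
  set H₁' : ℝ × ℝ → ℝ := fun p => if p.1 < p.2 then (g p.1 - m) * p.2 else 0 with hH₁'
  -- measurability
  have hmle : MeasurableSet {p : ℝ × ℝ | p.1 ≤ p.2} := measurableSet_le measurable_fst measurable_snd
  have hmlt : MeasurableSet {p : ℝ × ℝ | p.1 < p.2} := measurableSet_lt measurable_fst measurable_snd
  have hmlt' : MeasurableSet {p : ℝ × ℝ | p.2 < p.1} := measurableSet_lt measurable_snd measurable_fst
  have hgm1 : Measurable fun p : ℝ × ℝ => (g p.1 - m) * p.2 :=
    ((hg.comp measurable_fst).sub measurable_const).mul measurable_snd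
  have hgm2 : Measurable fun p : ℝ × ℝ => (g p.2 - m) * p.1 :=
    ((hg.comp measurable_snd).sub measurable_const).mul measurable_fst
  have hH₁m : Measurable H₁ := Measurable.ite hmle hgm1 measurable_const
  have hH₂m : Measurable H₂ := Measurable.ite hmlt' hgm2 measurable_const
  have hH₁'m : Measurable H₁' := Measurable.ite hmlt hgm1 measurable_const
  -- integrable dominating functions
  have habs2 : Integrable (fun p : ℝ × ℝ => (M - m) * |p.2|) (ν.prod ν) := by
    have h1 : Integrable (fun b : ℝ => (M - m) * |b|) ν := hint.abs.const_mul _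
    have : Integrable ((fun b : ℝ => (M - m) * |b|) ∘ Prod.snd) (ν.prod ν) := by
      refine (integrable_map_measure ?_ measurable_snd.aemeasurable).mp ?_
      · rw [Measure.map_snd_prod]; simpa using h1.aestronglyMeasurable
      · rw [Measure.map_snd_prod]; simpa using h1
    exact this
  have habs1 : Integrable (fun p : ℝ × ℝ => (M - m) * |p.1|) (ν.prod ν) := by
    have h1 : Integrable (fun b : ℝ => (M - m) * |b|) ν := hint.abs.const_mul _
    have : Integrable ((fun b : ℝ => (M - m) * |b|) ∘ Prod.fst) (ν.prod ν) := by
      refine (integrable_map_measure ?_ measurable_fst.aemeasurable).mp ?_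
      · rw [Measure.map_fst_prod]; simpa using h1.aestronglyMeasurable
      · rw [Measure.map_fst_prod]; simpa using h1
    exact this
  have hb1 : ∀ p : ℝ × ℝ, |H₁ p| ≤ (M - m) * |p.2| := by
    intro p; by_cases hp : p.1 ≤ p.2
    · simp only [hH₁, hp, if_true]
      rw [abs_mul]
      refine mul_le_mul_of_nonneg_right ?_ (abs_nonneg _)
      rw [abs_of_nonneg (by linarith [hgm p.1])]
      linarith [hgM p.1]
    · simp only [hH₁, hp, if_false, abs_zero]
      positivity
  have hb1' : ∀ p : ℝ × ℝ, |H₁' p| ≤ (M - m) * |p.2| := by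
    intro p; by_cases hp : p.1 < p.2
    · simp only [hH₁', hp, if_true]
      rw [abs_mul]
      refine mul_le_mul_of_nonneg_right ?_ (abs_nonneg _)
      rw [abs_of_nonneg (by linarith [hgm p.1])]
      linarith [hgM p.1]
    · simp only [hH₁', hp, if_false, abs_zero]
      positivity
  have hb2 : ∀ p : ℝ × ℝ, |H₂ p| ≤ (M - m) * |p.1| := by
    intro p; by_cases hp : p.2 < p.1
    · simp only [hH₂, hp, if_true]
      rw [abs_mul]
      refine mul_le_mul_of_nonneg_right ?_ (abs_nonneg _)
      rw [abs_of_nonneg (by linarith [hgm p.2])]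
      linarith [hgM p.2]
    · simp only [hH₂, hp, if_false, abs_zero]
      positivity
  have hH₁i : Integrable H₁ (ν.prod ν) :=
    Integrable.mono' habs2 hH₁m.aestronglyMeasurable (Filter.Eventually.of_forall hb1)
  have hH₁'i : Integrable H₁' (ν.prod ν) :=
    Integrable.mono' habs2 hH₁'m.aestronglyMeasurable (Filter.Eventually.of_forall hb1')
  have hH₂i : Integrable H₂ (ν.prod ν) :=
    Integrable.mono' habs1 hH₂m.aestronglyMeasurable (Filter.Eventually.of_forall hb2)
  -- split
  have hsplit : (fun p : ℝ × ℝ => (g (min p.1 p.2) - m) * max p.1 p.2) = fun p => H₁ p + H₂ p := by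
    funext p
    rcases le_or_gt p.1 p.2 with hp | hp
    · simp [hH₁, hH₂, hp, not_lt.mpr hp, min_eq_left hp, max_eq_right hp]
    · simp [hH₁, hH₂, not_le.mpr hp, hp, min_eq_right hp.le, max_eq_left hp.le]
  rw [hsplit, integral_add hH₁i hH₂i]
  -- swap H₂
  have hswap : ∫ p, H₂ p ∂(ν.prod ν) = ∫ p, H₁' p ∂(ν.prod ν) := by
    have : ∀ p : ℝ × ℝ, H₂ p = H₁' p.swap := by
      intro p; simp [hH₂, hH₁', Prod.swap]
    simp_rw [this]
    exact integral_prod_swap H₁'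
  rw [hswap, ← integral_add hH₁i hH₁'i]
  -- Fubini
  have hfub := integral_prod (fun z : ℝ × ℝ => H₁ z + H₁' z) (hH₁i.add hH₁'i)
  rw [hfub]
  refine integral_nonneg (fun a => ?_)
  have hinner : ∀ b, H₁ (a, b) + H₁' (a, b)
      = (g a - m) * ((if a ≤ b then b else 0) + (if a < b then b else 0)) := by
    intro b
    simp only [hH₁, hH₁']
    by_cases h1 : a ≤ b <;> by_cases h2 : a < b <;>
      simp [h1, h2, mul_add] <;> first | ring | (exfalso; exact h1 h2.le)
  simp_rw [hinner]
  simp only [Pi.zero_apply]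
  have hint1 : Integrable (fun b => if a ≤ b then b else 0) ν := by
    refine Integrable.mono' hint.abs ?_ (Filter.Eventually.of_forall fun b => ?_)
    · exact (measurable_id.ite (measurableSet_le measurable_const measurable_id)
        measurable_const).aestronglyMeasurable
    · by_cases hb : a ≤ b <;> simp [hb, le_abs_self, abs_nonneg]
  have hint2 : Integrable (fun b => if a < b then b else 0) ν := by
    refine Integrable.mono' hint.abs ?_ (Filter.Eventually.of_forall fun b => ?_)
    · exact (measurable_id.ite (measurableSet_lt measurable_const measurable_id)
        measurable_const).aestronglyMeasurable
    · by_cases hb : a < b <;> simp [hb, le_abs_self, abs_nonneg]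
  rw [integral_const_mul]
  refine mul_nonneg (by linarith [hgm a]) ?_
  rw [integral_add hint1 hint2]
  have hp1 := psi_nonneg ν hint hμ a (fun b => a ≤ b)
    (measurableSet_le measurable_const measurable_id)
    (fun b hb => (not_le.mp hb).le) (fun b hb => hb)
  have hp2 := psi_nonneg ν hint hμ a (fun b => a < b)
    (measurableSet_lt measurable_const measurable_id)
    (fun b hb => not_lt.mp hb) (fun b hb => hb.le)
  linarith

lemma pair_omega {Ω : Type*} [MeasurableSpace Ω] (P : Measure Ω) [IsProbabilityMeasure P]
    (A B : Ω → ℝ) (hA : Measurable A) (hB : Measurable B)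
    (hAB : IndepFun A B P) (hid : IdentDistrib A B P P)
    (hint : Integrable A P) (hμ0 : 0 ≤ ∫ ω, A ω ∂P)
    (g : ℝ → ℝ) (hg : Measurable g) (m M : ℝ) (hgm : ∀ x, m ≤ g x) (hgM : ∀ x, g x ≤ M) :
    0 ≤ ∫ ω, (g (min (A ω) (B ω)) - m) * max (A ω) (B ω) ∂P := by
  set ν : Measure ℝ := P.map A with hν
  haveI : IsProbabilityMeasure ν := Measure.isProbabilityMeasure_map hA.aemeasurable
  have hintν : Integrable (fun b => b) ν := by
    have : Integrable (id : ℝ → ℝ) ν := by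
      rw [hν, integrable_map_measure aestronglyMeasurable_id hA.aemeasurable]
      exact hint
    exact this
  have hμν : 0 ≤ ∫ b, b ∂ν := by
    have : 0 ≤ ∫ b, (id : ℝ → ℝ) b ∂ν := by
      rw [hν, integral_map hA.aemeasurable aestronglyMeasurable_id]
      exact hμ0
    exact this
  have hmap : P.map (fun ω => (A ω, B ω)) = ν.prod ν := by
    rw [(indepFun_iff_map_prod_eq_prod_map_map hA.aemeasurable hB.aemeasurable).mp hAB,
      ← hid.map_eq, ← hν]
  have hHmeas : Measurable fun p : ℝ × ℝ => (g (min p.1 p.2) - m) * max p.1 p.2 :=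
    ((hg.comp (measurable_fst.min measurable_snd)).sub measurable_const).mul
      (measurable_fst.max measurable_snd)
  have key := pair_prod_nonneg ν hintν hμν g hg m M hgm hgM
  rw [← hmap, integral_map (hA.aemeasurable.prodMk hB.aemeasurable)
    hHmeas.aestronglyMeasurable] at key
  exact key

/-- if (σ/μ)·K_N ≥ M/m − 1 then sorting the data in decreasing
order increases the expected second-order SGD correction term: E[ξ†] ≥ E[ξ̄]. -/
theorem stmt11 {Ω : Type*} [MeasurableSpace Ω] (P : Measure Ω)
    [IsProbabilityMeasure P]
    (N : ℕ) (hN : 2 ≤ N)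
    (X : ℕ → Ω → ℝ) (hmeas : ∀ i, Measurable (X i))
    (hindep : iIndepFun X P)
    (hident : ∀ i j, IdentDistrib (X i) (X j) P P)
    (μ σ : ℝ) (hμ : 0 < μ) (hσ : 0 ≤ σ)
    (hmean : ∀ i, ∫ ω, X i ω ∂P = μ)
    (hvar : ∀ i, variance (X i) P = σ ^ 2)
    (Xs : ℕ → Ω → ℝ) (hXsmeas : ∀ i, Measurable (Xs i))
    (hperm : ∀ ω, ∃ e : Equiv.Perm (Fin N), ∀ i : Fin N, Xs i ω = X (e i) ω)
    (hsorted : ∀ ω, ∀ j k, j ≤ k → k < N → Xs k ω ≤ Xs j ω)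
    (g : ℝ → ℝ) (hg : Measurable g)
    (m M : ℝ) (hm : 0 < m) (hmM : m ≤ M)
    (hbound : ∀ x, m ≤ g x ∧ g x ≤ M)
    (ξbar ξdag : Ω → ℝ)
    (hξbar : ξbar = fun ω => (2 / (N * (N - 1) : ℝ)) *
        ∑ j ∈ Finset.range N, ∑ k ∈ Finset.range j, g (X j ω) * X k ω)
    (hξdag : ξdag = fun ω => (2 / (N * (N - 1) : ℝ)) *
        ∑ j ∈ Finset.range N, ∑ k ∈ Finset.range j, g (Xs j ω) * Xs k ω)
    (K : ℝ)
    (hK : K = (2 / (N * (N - 1) : ℝ)) *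
        ∑ i ∈ Finset.range N, ∑ j ∈ Finset.range i,
          ∫ ω, (Xs j ω - μ) / σ ∂P)
    (hKpos : 0 ≤ K)
    (hcond : σ / μ * K ≥ M / m - 1) :
    ∫ ω, ξbar ω ∂P ≤ ∫ ω, ξdag ω ∂P := by
  classical
  have h2N : (2:ℝ) ≤ (N:ℝ) := by exact_mod_cast hN
  have h1N : 1 ≤ N := by omega
  have hD : (0:ℝ) < (N:ℝ) * ((N:ℝ) - 1) := by nlinarith
  set c : ℝ := 2 / ((N:ℝ) * ((N:ℝ) - 1)) with hc
  have hc0 : 0 ≤ c := by positivity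
  -- Gauss sum
  have hsumid : (∑ j ∈ Finset.range N, (j:ℝ)) * 2 = (N:ℝ) * ((N:ℝ) - 1) := by
    have h := Finset.sum_range_id_mul_two N
    calc (∑ j ∈ Finset.range N, (j:ℝ)) * 2
        = (((∑ j ∈ Finset.range N, j) * 2 : ℕ) : ℝ) := by push_cast; ring
      _ = ((N * (N - 1) : ℕ) : ℝ) := by rw [h]
      _ = (N:ℝ) * ((N:ℝ) - 1) := by
          rw [Nat.cast_mul, Nat.cast_sub h1N, Nat.cast_one]
  have hcount : ∀ r : ℝ, c * ∑ j ∈ Finset.range N, ∑ k ∈ Finset.range j, r = r := by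
    intro r
    have hconst : ∀ j : ℕ, ∑ _k ∈ Finset.range j, r = (j:ℝ) * r := by
      intro j; rw [Finset.sum_const, Finset.card_range, nsmul_eq_mul]
    simp_rw [hconst]
    rw [← Finset.sum_mul, ← mul_assoc]
    have : c * ∑ j ∈ Finset.range N, (j:ℝ) = 1 := by
      rw [hc, div_mul_eq_mul_div, div_eq_one_iff_eq hD.ne']; linarith [hsumid]
    rw [this, one_mul]
  -- integrability facts
  have hXint : ∀ i, Integrable (X i) P := by
    intro i; by_contra h
    have h0 := integral_undef h
    rw [hmean i] at h0; exact hμ.ne' h0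
  have habsSum : Integrable (fun ω => ∑ i ∈ Finset.range N, |X i ω|) P :=
    integrable_finset_sum _ (fun i _ => (hXint i).abs)
  have hXsint : ∀ j, j < N → Integrable (Xs j) P := by
    intro j hj
    refine habsSum.mono' (hXsmeas j).aestronglyMeasurable
      (Filter.Eventually.of_forall fun ω => ?_)
    obtain ⟨e, he⟩ := hperm ω
    have hv : Xs j ω = X ((e ⟨j, hj⟩ : Fin N) : ℕ) ω := he ⟨j, hj⟩
    rw [Real.norm_eq_abs, hv]
    exact Finset.single_le_sum (f := fun i => |X i ω|) (fun i _ => abs_nonneg _)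
      (Finset.mem_range.mpr (e ⟨j, hj⟩).isLt)
  have hgpos : ∀ x, 0 < g x := fun x => lt_of_lt_of_le hm (hbound x).1
  have hM0 : (0:ℝ) ≤ M := le_trans hm.le hmM
  have hgXint : ∀ i, Integrable (fun ω => g (X i ω)) P := by
    intro i
    refine (integrable_const M).mono' (hg.comp (hmeas i)).aestronglyMeasurable
      (Filter.Eventually.of_forall fun ω => ?_)
    rw [Real.norm_eq_abs, abs_of_pos (hgpos _)]; exact (hbound _).2
  have habsmax : ∀ a b : ℝ, |max a b| ≤ |a| + |b| := by
    intro a b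
    rcases le_total a b with h | h
    · rw [max_eq_right h]; exact le_add_of_nonneg_left (abs_nonneg _)
    · rw [max_eq_left h]; exact le_add_of_nonneg_right (abs_nonneg _)
  have hmaxint : ∀ j k, Integrable (fun ω => max (X j ω) (X k ω)) P := by
    intro j k
    refine ((hXint j).abs.add (hXint k).abs).mono'
      ((hmeas j).max (hmeas k)).aestronglyMeasurable
      (Filter.Eventually.of_forall fun ω => ?_)
    rw [Real.norm_eq_abs]; exact habsmax _ _
  have hFint : ∀ j k, Integrable
      (fun ω => g (min (X j ω) (X k ω)) * max (X j ω) (X k ω)) P := by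
    intro j k
    refine (((hXint j).abs.add (hXint k).abs).const_mul M).mono'
      ((hg.comp ((hmeas j).min (hmeas k))).mul ((hmeas j).max (hmeas k))).aestronglyMeasurable
      (Filter.Eventually.of_forall fun ω => ?_)
    rw [Real.norm_eq_abs, abs_mul, abs_of_pos (hgpos _)]
    exact mul_le_mul (hbound _).2 (habsmax _ _) (abs_nonneg _) hM0
  have hgXkint : ∀ j k, Integrable (fun ω => g (X j ω) * X k ω) P := by
    intro j k
    refine ((hXint k).abs.const_mul M).mono'
      ((hg.comp (hmeas j)).mul (hmeas k)).aestronglyMeasurable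
      (Filter.Eventually.of_forall fun ω => ?_)
    rw [Real.norm_eq_abs, abs_mul, abs_of_pos (hgpos _)]
    exact mul_le_mul_of_nonneg_right (hbound _).2 (abs_nonneg _)
  -- E[ξbar]
  have hEbar : ∫ ω, ξbar ω ∂P
      = c * ∑ j ∈ Finset.range N, ∑ k ∈ Finset.range j, (∫ ω, g (X j ω) ∂P) * μ := by
    simp only [hξbar]
    rw [integral_const_mul]
    congr 1
    rw [integral_finset_sum _ (fun j _ => integrable_finset_sum _ (fun k _ => hgXkint j k))]
    refine Finset.sum_congr rfl fun j _ => ?_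
    rw [integral_finset_sum _ (fun k _ => hgXkint j k)]
    refine Finset.sum_congr rfl fun k hk => ?_
    have hne : j ≠ k := Nat.ne_of_gt (Finset.mem_range.mp hk)
    have hind : IndepFun (fun ω => g (X j ω)) (X k) P :=
      (hindep.indepFun hne).comp hg measurable_id
    have hmul := IndepFun.integral_fun_mul_eq_mul_integral hind (hgXint j).aestronglyMeasurable
      (hXint k).aestronglyMeasurable
    rw [hmean k] at hmul
    exact hmul
  have hGle : ∀ j, ∫ ω, g (X j ω) ∂P ≤ M := by
    intro j
    calc ∫ ω, g (X j ω) ∂P ≤ ∫ _ω, (M:ℝ) ∂P :=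
        integral_mono (hgXint j) (integrable_const M) (fun ω => (hbound _).2)
      _ = M := by simp
  -- E[ξdag]
  have hFsymm : ∀ x y : ℝ, g (min x y) * max x y = g (min y x) * max y x := by
    intro x y; rw [min_comm, max_comm]
  have hptdag : ∀ ω, (∑ j ∈ Finset.range N, ∑ k ∈ Finset.range j, g (Xs j ω) * Xs k ω)
      = ∑ j ∈ Finset.range N, ∑ k ∈ Finset.range j,
          g (min (X j ω) (X k ω)) * max (X j ω) (X k ω) := by
    intro ω
    obtain ⟨e, he⟩ := hperm ω
    have h1 : (∑ j ∈ Finset.range N, ∑ k ∈ Finset.range j, g (Xs j ω) * Xs k ω)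
        = ∑ j ∈ Finset.range N, ∑ k ∈ Finset.range j,
            g (min (Xs j ω) (Xs k ω)) * max (Xs j ω) (Xs k ω) := by
      refine Finset.sum_congr rfl fun j hj => Finset.sum_congr rfl fun k hk => ?_
      have hle : Xs j ω ≤ Xs k ω :=
        hsorted ω k j (le_of_lt (Finset.mem_range.mp hk)) (Finset.mem_range.mp hj)
      rw [min_eq_left hle, max_eq_right hle]
    rw [h1]
    exact tri_perm (fun x y => g (min x y) * max x y) hFsymm
      (fun n => X n ω) (fun n => Xs n ω) e he
  have hEdag : ∫ ω, ξdag ω ∂P = c * ∑ j ∈ Finset.range N, ∑ k ∈ Finset.range j,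
      ∫ ω, g (min (X j ω) (X k ω)) * max (X j ω) (X k ω) ∂P := by
    simp only [hξdag]
    have hfe : (fun ω => c * ∑ j ∈ Finset.range N, ∑ k ∈ Finset.range j,
        g (Xs j ω) * Xs k ω)
        = fun ω => c * ∑ j ∈ Finset.range N, ∑ k ∈ Finset.range j,
            g (min (X j ω) (X k ω)) * max (X j ω) (X k ω) :=
      funext fun ω => by rw [hptdag ω]
    rw [hfe, integral_const_mul]
    congr 1
    rw [integral_finset_sum _ (fun j _ => integrable_finset_sum _ (fun k _ => hFint j k))]
    exact Finset.sum_congr rfl fun j _ => integral_finset_sum _ (fun k _ => hFint j k)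
  -- per-pair lower bound
  have hJm : ∀ j k, j ≠ k → m * (∫ ω, max (X j ω) (X k ω) ∂P)
      ≤ ∫ ω, g (min (X j ω) (X k ω)) * max (X j ω) (X k ω) ∂P := by
    intro j k hne
    have h0 := pair_omega P (X j) (X k) (hmeas j) (hmeas k) (hindep.indepFun hne)
      (hident j k) (hXint j) (by rw [hmean j]; exact hμ.le) g hg m M
      (fun x => (hbound x).1) (fun x => (hbound x).2)
    have hsub : (fun ω => (g (min (X j ω) (X k ω)) - m) * max (X j ω) (X k ω))
        = fun ω => g (min (X j ω) (X k ω)) * max (X j ω) (X k ω)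
            - m * max (X j ω) (X k ω) := by
      funext ω; ring
    rw [hsub, integral_sub (hFint j k) ((hmaxint j k).const_mul m),
      integral_const_mul] at h0
    linarith
  have hMge : ∀ j k, μ ≤ ∫ ω, max (X j ω) (X k ω) ∂P := by
    intro j k
    calc μ = ∫ ω, X j ω ∂P := (hmean j).symm
      _ ≤ ∫ ω, max (X j ω) (X k ω) ∂P :=
        integral_mono (hXint j) (hmaxint j k) (fun ω => le_max_left _ _)
  set T : ℝ := ∑ j ∈ Finset.range N, ∑ k ∈ Finset.range j,
      ∫ ω, max (X j ω) (X k ω) ∂P with hT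
  -- key inequality
  have hkey : M * μ ≤ m * (c * T) := by
    rcases eq_or_lt_of_le hσ with hσ0 | hσpos
    · -- σ = 0, so M = m
      have hMm : M = m := by
        have h0 : σ / μ * K = 0 := by rw [← hσ0]; simp
        have h1 : M / m - 1 ≤ 0 := by rw [← h0]; exact hcond
        have h2 : M ≤ m := by
          have := (div_le_one hm).mp (by linarith : M / m ≤ 1)
          exact this
        exact le_antisymm h2 hmM
      rw [hMm]
      have h1 : μ ≤ c * T := by
        rw [← hcount μ]
        refine mul_le_mul_of_nonneg_left ?_ hc0
        exact Finset.sum_le_sum fun j _ => Finset.sum_le_sum fun k _ => hMge j k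
      exact mul_le_mul_of_nonneg_left h1 hm.le
    · -- σ > 0
      have hσne : σ ≠ 0 := hσpos.ne'
      have hS : (∑ i ∈ Finset.range N, ∑ j ∈ Finset.range i, ∫ ω, Xs j ω ∂P) = T := by
        have h1 : (∑ i ∈ Finset.range N, ∑ j ∈ Finset.range i, ∫ ω, Xs j ω ∂P)
            = ∫ ω, ∑ i ∈ Finset.range N, ∑ j ∈ Finset.range i, Xs j ω ∂P := by
          rw [integral_finset_sum _ (fun i hi => integrable_finset_sum _
            (fun j hj => hXsint j (lt_trans (Finset.mem_range.mp hj)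
              (Finset.mem_range.mp hi))))]
          exact Finset.sum_congr rfl fun i hi =>
            (integral_finset_sum _ (fun j hj => hXsint j (lt_trans (Finset.mem_range.mp hj)
              (Finset.mem_range.mp hi)))).symm
        have h2 : ∀ ω, (∑ i ∈ Finset.range N, ∑ j ∈ Finset.range i, Xs j ω)
            = ∑ j ∈ Finset.range N, ∑ k ∈ Finset.range j, max (X j ω) (X k ω) := by
          intro ω
          obtain ⟨e, he⟩ := hperm ω
          have h3 : (∑ i ∈ Finset.range N, ∑ j ∈ Finset.range i, Xs j ω)
              = ∑ i ∈ Finset.range N, ∑ j ∈ Finset.range i, max (Xs i ω) (Xs j ω) := by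
            refine Finset.sum_congr rfl fun i hi => Finset.sum_congr rfl fun j hj => ?_
            rw [max_eq_right (hsorted ω j i (le_of_lt (Finset.mem_range.mp hj))
              (Finset.mem_range.mp hi))]
          rw [h3]
          exact tri_perm (fun x y => max x y) (fun x y => max_comm x y)
            (fun n => X n ω) (fun n => Xs n ω) e he
        rw [h1]
        calc ∫ ω, ∑ i ∈ Finset.range N, ∑ j ∈ Finset.range i, Xs j ω ∂P
            = ∫ ω, ∑ j ∈ Finset.range N, ∑ k ∈ Finset.range j,
                max (X j ω) (X k ω) ∂P :=
              integral_congr_ae (Filter.Eventually.of_forall fun ω => h2 ω)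
          _ = T := by
              rw [hT, integral_finset_sum _ (fun j _ => integrable_finset_sum _
                (fun k _ => hmaxint j k))]
              exact Finset.sum_congr rfl fun j _ =>
                integral_finset_sum _ (fun k _ => hmaxint j k)
      have hcT : c * T = μ + σ * K := by
        have hKi : ∀ i ∈ Finset.range N, (∑ j ∈ Finset.range i,
            ∫ ω, (Xs j ω - μ) / σ ∂P)
            = ∑ j ∈ Finset.range i, ((∫ ω, Xs j ω ∂P) - μ) / σ := by
          intro i hi
          refine Finset.sum_congr rfl fun j hj => ?_
          have hjN : j < N := lt_trans (Finset.mem_range.mp hj) (Finset.mem_range.mp hi)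
          rw [integral_div, integral_sub (hXsint j hjN) (integrable_const μ),
            integral_const]
          simp
        have hKval : K = c * (((∑ i ∈ Finset.range N, ∑ j ∈ Finset.range i,
            ∫ ω, Xs j ω ∂P) - ∑ i ∈ Finset.range N, ∑ j ∈ Finset.range i, μ) / σ) := by
          rw [hK, Finset.sum_congr rfl hKi]
          congr 1
          simp only [← Finset.sum_div]
          congr 1
          simp only [Finset.sum_sub_distrib]
        have hμtot : c * ∑ i ∈ Finset.range N, ∑ j ∈ Finset.range i, μ = μ := hcount μ
        have hfin : σ * K = c * T - μ := by
          rw [hKval, hS]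
          have hstep : σ * (c * ((T - ∑ i ∈ Finset.range N, ∑ j ∈ Finset.range i, μ) / σ))
              = c * T - c * ∑ i ∈ Finset.range N, ∑ j ∈ Finset.range i, μ := by
            field_simp
          rw [hstep, hμtot]
        linarith
      have h1 : (M / m - 1) * (μ * m) ≤ (σ / μ * K) * (μ * m) :=
        mul_le_mul_of_nonneg_right hcond (by positivity)
      have h2 : (M / m - 1) * (μ * m) = M * μ - μ * m := by field_simp
      have h3 : (σ / μ * K) * (μ * m) = σ * K * m := by field_simp
      rw [hcT]
      nlinarith
  -- final chain
  rw [hEbar, hEdag]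
  have hbar_le : c * (∑ j ∈ Finset.range N, ∑ k ∈ Finset.range j,
      (∫ ω, g (X j ω) ∂P) * μ) ≤ M * μ := by
    have hs : (∑ j ∈ Finset.range N, ∑ k ∈ Finset.range j, (∫ ω, g (X j ω) ∂P) * μ)
        ≤ ∑ j ∈ Finset.range N, ∑ k ∈ Finset.range j, M * μ :=
      Finset.sum_le_sum fun j _ => Finset.sum_le_sum fun k _ =>
        mul_le_mul_of_nonneg_right (hGle j) hμ.le
    calc c * (∑ j ∈ Finset.range N, ∑ k ∈ Finset.range j, (∫ ω, g (X j ω) ∂P) * μ)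
        ≤ c * ∑ j ∈ Finset.range N, ∑ k ∈ Finset.range j, M * μ :=
          mul_le_mul_of_nonneg_left hs hc0
      _ = M * μ := hcount (M * μ)
  have hdag_ge : m * (c * T) ≤ c * ∑ j ∈ Finset.range N, ∑ k ∈ Finset.range j,
      ∫ ω, g (min (X j ω) (X k ω)) * max (X j ω) (X k ω) ∂P := by
    have hs : (∑ j ∈ Finset.range N, ∑ k ∈ Finset.range j,
        m * ∫ ω, max (X j ω) (X k ω) ∂P)
        ≤ ∑ j ∈ Finset.range N, ∑ k ∈ Finset.range j,
            ∫ ω, g (min (X j ω) (X k ω)) * max (X j ω) (X k ω) ∂P :=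
      Finset.sum_le_sum fun j _ => Finset.sum_le_sum fun k hk =>
        hJm j k (Nat.ne_of_gt (Finset.mem_range.mp hk))
    have heq : m * (c * T) = c * ∑ j ∈ Finset.range N, ∑ k ∈ Finset.range j,
        m * ∫ ω, max (X j ω) (X k ω) ∂P := by
      have hdist : (∑ j ∈ Finset.range N, ∑ k ∈ Finset.range j,
          m * ∫ ω, max (X j ω) (X k ω) ∂P) = m * T := by
        rw [hT, Finset.mul_sum]
        exact Finset.sum_congr rfl fun j _ => (Finset.mul_sum _ _ _).symm
      rw [hdist]
      ring
    rw [heq]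
    exact mul_le_mul_of_nonneg_left hs hc0
  linarith
end
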